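/- Let H be a Tonelli Hamiltonian on ℝⁿ × ℝⁿ with associated Tonelli Lagrangian L, ℤⁿ-periodic in x, and let λ > 0. Suppose u : ℝⁿ → ℝ is bounded, continuous and λ-dominated by L, and γ : (−∞,0] → ℝⁿ is a piecewise C¹ curve with γ(0) = x₀ such that γ|_{[t,0]} is (u,L)-λ-calibrated for every t < 0. Then the improper integral ∫_{−∞}^0 e^{λs} L(γ(s), γ̇(s)) ds converges and u(x₀) = ∫_{−∞}^0 e^{λs} L(γ(s), γ̇(s)) ds; moreover, for every piecewise C¹ curve σ : (−∞,0] → ℝⁿ with σ(0) = x₀, u(x₀) ≤ ∫_{−∞}^0 e^{λs} L(σ(s), σ̇(s)) ds (the integral being a well-defined element of (−∞,+∞] since L is bounded below). -/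

import Mathlib

open Set Filter MeasureTheory Real

noncomputable section

abbrev E (n : ℕ) : Type := EuclideanSpace ℝ (Fin n)

noncomputable def Hp {n : ℕ} (H : E n × E n → ℝ) (x p : E n) : E n :=
  gradient (fun q => H (x, q)) p

noncomputable def Hx {n : ℕ} (H : E n × E n → ℝ) (x p : E n) : E n :=
  gradient (fun y => H (y, p)) x

noncomputable def Lv {n : ℕ} (L : E n × E n → ℝ) (x v : E n) : E n :=
  gradient (fun w => L (x, w)) v

noncomputable def Lx {n : ℕ} (L : E n × E n → ℝ) (x v : E n) : E n :=
  gradient (fun y => L (y, v)) x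

/-- A Tonelli Hamiltonian. -/
def Tonelli {n : ℕ} (H : E n × E n → ℝ) : Prop :=
  ContDiff ℝ 2 H ∧
  (∀ x p v : E n, v ≠ 0 → 0 < (inner ℝ (fderiv ℝ (fun q => Hp H x q) p v) v : ℝ)) ∧
  (∀ A : ℝ, ∃ B : ℝ, 0 ≤ B ∧ ∀ x p : E n, A * ‖p‖ - B ≤ H (x, p))

/-- `L` is the Lagrangian associated to `H` by fiberwise Legendre-Fenchel transform. -/
def IsLagrangianOf {n : ℕ} (L H : E n × E n → ℝ) : Prop :=
  ∀ x v : E n, IsLUB {r : ℝ | ∃ p : E n, r = (inner ℝ p v : ℝ) - H (x, p)} (L (x, v))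

/-- A continuous piecewise `C¹` curve on `[a,b]`, with derivative `γ'`. -/
def PiecewiseC1 {n : ℕ} (a b : ℝ) (γ γ' : ℝ → E n) : Prop :=
  ContinuousOn γ (Set.Icc a b) ∧
  ∃ s : Finset ℝ,
    (∀ t ∈ Set.Icc a b, t ∉ s → HasDerivAt γ (γ' t) t) ∧
    ContinuousOn γ' (Set.Icc a b \ s) ∧
    ∃ C : ℝ, ∀ t ∈ Set.Icc a b, ‖γ' t‖ ≤ C

/-- `u` is λ-dominated by `L`. -/
def Dominated {n : ℕ} (lam : ℝ) (L : E n × E n → ℝ) (u : E n → ℝ) : Prop :=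
  ∀ a b : ℝ, a < b → ∀ γ γ' : ℝ → E n, PiecewiseC1 a b γ γ' →
    Real.exp (lam * b) * u (γ b) - Real.exp (lam * a) * u (γ a) ≤
      ∫ t in a..b, Real.exp (lam * t) * L (γ t, γ' t)

/-- `γ` is `(u,L)`-λ-calibrated on `[a,b]`. -/
def Calibrated {n : ℕ} (lam : ℝ) (L : E n × E n → ℝ) (u : E n → ℝ)
    (a b : ℝ) (γ γ' : ℝ → E n) : Prop :=
  Real.exp (lam * b) * u (γ b) - Real.exp (lam * a) * u (γ a) =
    ∫ t in a..b, Real.exp (lam * t) * L (γ t, γ' t)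

def intVec {n : ℕ} (k : Fin n → ℤ) : E n :=
  (EuclideanSpace.equiv (Fin n) ℝ).symm (fun i => (k i : ℝ))



private lemma L_meas {n : ℕ} {H L : E n × E n → ℝ} (hHc : Continuous H)
    (hLH : IsLagrangianOf L H) : Measurable L := by
  have hlsc : LowerSemicontinuous L := by
    rintro ⟨x, v⟩ y hy
    obtain ⟨r, hrS, hyr⟩ :
        ∃ r ∈ {r : ℝ | ∃ p : E n, r = (inner ℝ p v : ℝ) - H (x, p)}, y < r := by
      by_contra hcon
      push_neg at hcon
      exact absurd ((hLH x v).2 hcon) (not_le.mpr hy)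
    obtain ⟨p, rfl⟩ := hrS
    have hcont : Continuous fun z : E n × E n => (inner ℝ p z.2 : ℝ) - H (z.1, p) :=
      (continuous_const.inner continuous_snd).sub
        (hHc.comp (continuous_fst.prodMk continuous_const))
    have hev : ∀ᶠ z' : E n × E n in nhds (x, v), y < (inner ℝ p z'.2 : ℝ) - H (z'.1, p) :=
      (hcont.tendsto (x, v)).eventually (eventually_gt_nhds hyr)
    filter_upwards [hev] with z' hz'
    have hle : (inner ℝ p z'.2 : ℝ) - H (z'.1, p) ≤ L (z'.1, z'.2) :=
      (hLH z'.1 z'.2).1 ⟨p, rfl⟩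
    exact hz'.trans_le (by simpa using hle)
  exact hlsc.measurable

private lemma L_lb {n : ℕ} {H L : E n × E n → ℝ} (hHc : Continuous H)
    (hLH : IsLagrangianOf L H)
    (hper : ∀ (k : Fin n → ℤ) (x pp : E n), H (x + intVec k, pp) = H (x, pp)) :
    ∃ c : ℝ, ∀ x v : E n, c ≤ L (x, v) := by
  set K : Set (E n) := ((EuclideanSpace.equiv (Fin n) ℝ).symm : (Fin n → ℝ) → E n) ''
      (Set.univ.pi fun _ => Set.Icc (0:ℝ) 1) with hKdef
  have hKc : IsCompact K :=
    (isCompact_univ_pi fun _ => isCompact_Icc).image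
      (EuclideanSpace.equiv (Fin n) ℝ).symm.continuous
  obtain ⟨M, hM⟩ : ∃ M, ∀ y ∈ K, H (y, 0) ≤ M := by
    obtain ⟨M, hM⟩ := (hKc.image (hHc.comp (continuous_id.prodMk continuous_const))).bddAbove
    exact ⟨M, fun y hy => hM (Set.mem_image_of_mem _ hy)⟩
  refine ⟨-M, fun x v => ?_⟩
  have hx : H (x, 0) ≤ M := by
    set k : Fin n → ℤ := fun i => ⌊x i⌋ with hkdef
    have hy : x - intVec k ∈ K := by
      refine ⟨fun i => x i - (k i : ℝ), fun i _ => ?_, rfl⟩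
      exact ⟨sub_nonneg.mpr (Int.floor_le _),
        by have := Int.lt_floor_add_one (x i); simp only [hkdef]; linarith⟩
    have hxeq : (x - intVec k) + intVec k = x := sub_add_cancel x (intVec k)
    calc H (x, 0) = H ((x - intVec k) + intVec k, 0) := by rw [hxeq]
      _ = H (x - intVec k, 0) := hper k _ 0
      _ ≤ M := hM _ hy
  have hmem : (inner ℝ (0 : E n) v : ℝ) - H (x, 0) ≤ L (x, v) := (hLH x v).1 ⟨0, rfl⟩
  rw [inner_zero_left] at hmem
  linarith

private lemma L_ub {n : ℕ} {H L : E n × E n → ℝ} (hLH : IsLagrangianOf L H)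
    (hsl : ∀ A : ℝ, ∃ B : ℝ, 0 ≤ B ∧ ∀ x p : E n, A * ‖p‖ - B ≤ H (x, p)) :
    ∀ V : ℝ, ∃ B : ℝ, ∀ x v : E n, ‖v‖ ≤ V → L (x, v) ≤ B := by
  intro V
  obtain ⟨B, _, hB⟩ := hsl V
  refine ⟨B, fun x v hv => (hLH x v).2 ?_⟩
  rintro r ⟨p, rfl⟩
  have h1 : (inner ℝ p v : ℝ) ≤ ‖p‖ * ‖v‖ := real_inner_le_norm p v
  have h2 := hB x p
  nlinarith [norm_nonneg p, mul_le_mul_of_nonneg_left hv (norm_nonneg p)]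

private lemma exp_intA {lam : ℝ} (hlam : 0 < lam) (a : ℝ) :
    (∫ t in a..(0:ℝ), Real.exp (lam * t)) = (1 - Real.exp (lam * a)) / lam := by
  have h : ∀ t ∈ Set.uIcc a (0:ℝ), HasDerivAt (fun t => Real.exp (lam * t) / lam)
      (Real.exp (lam * t)) t := by
    intro t _
    have h1 : HasDerivAt (fun t : ℝ => lam * t) lam t := by
      simpa using (hasDerivAt_id t).const_mul lam
    have h2 := ((Real.hasDerivAt_exp (lam * t)).comp t h1).div_const lam
    rw [mul_div_cancel_right₀ _ hlam.ne'] at h2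
    exact h2
  rw [intervalIntegral.integral_eq_sub_of_hasDerivAt h
    ((Real.continuous_exp.comp (continuous_const.mul continuous_id)).intervalIntegrable a 0)]
  simp only [mul_zero, Real.exp_zero]
  ring

private lemma integrableOn_interval {n : ℕ} {L : E n × E n → ℝ} (hLm : Measurable L)
    {c : ℝ} (hc : ∀ x v : E n, c ≤ L (x, v))
    (hup : ∀ V : ℝ, ∃ B : ℝ, ∀ x v : E n, ‖v‖ ≤ V → L (x, v) ≤ B)
    {lam : ℝ} (hlam : 0 < lam) {a : ℝ} (ha : a ≤ 0) {γ γ' : ℝ → E n}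
    (h : PiecewiseC1 a 0 γ γ') :
    IntegrableOn (fun t => Real.exp (lam * t) * L (γ t, γ' t)) (Set.Icc a 0) volume := by
  obtain ⟨hγc, s, hderiv, hγ'c, C, hC⟩ := h
  obtain ⟨B, hB⟩ := hup C
  have hsm : MeasurableSet ((Set.Icc a 0 : Set ℝ) \ s) :=
    measurableSet_Icc.diff s.finite_toSet.measurableSet
  have hrestr : volume.restrict ((Set.Icc a 0 : Set ℝ) \ s) = volume.restrict (Set.Icc a 0) :=
    Measure.restrict_congr_set (MeasureTheory.diff_ae_eq_self.mpr
      (measure_mono_null Set.inter_subset_right (s.finite_toSet.measure_zero _)))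
  have hγm : AEMeasurable γ (volume.restrict (Set.Icc a 0)) :=
    hγc.aemeasurable measurableSet_Icc
  have hγ'm : AEMeasurable γ' (volume.restrict (Set.Icc a 0)) := by
    rw [← hrestr]; exact hγ'c.aemeasurable hsm
  have hfm : AEMeasurable (fun t => Real.exp (lam * t) * L (γ t, γ' t))
      (volume.restrict (Set.Icc a 0)) :=
    ((Real.measurable_exp.comp (measurable_const.mul measurable_id)).aemeasurable).mul
      (hLm.comp_aemeasurable (hγm.prodMk hγ'm))
  refine Integrable.mono' (g := fun _ => max |c| |B|)
    (integrableOn_const measure_Icc_lt_top.ne) hfm.aestronglyMeasurable ?_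
  rw [ae_restrict_iff' measurableSet_Icc]
  filter_upwards with t ht
  have h1 : c ≤ L (γ t, γ' t) := hc _ _
  have h2 : L (γ t, γ' t) ≤ B := hB _ _ (hC t ht)
  have h3 : Real.exp (lam * t) ≤ 1 :=
    Real.exp_le_one_iff.mpr (mul_nonpos_of_nonneg_of_nonpos hlam.le ht.2)
  have h4 : |L (γ t, γ' t)| ≤ max |c| |B| := by
    rw [abs_le]
    constructor
    · calc -(max |c| |B|) ≤ -|c| := neg_le_neg (le_max_left _ _)
        _ ≤ c := neg_abs_le c
        _ ≤ _ := h1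
    · exact h2.trans ((le_abs_self B).trans (le_max_right _ _))
  calc ‖Real.exp (lam * t) * L (γ t, γ' t)‖
      = Real.exp (lam * t) * |L (γ t, γ' t)| := by
        rw [Real.norm_eq_abs, abs_mul, abs_of_pos (Real.exp_pos _)]
    _ ≤ 1 * max |c| |B| := mul_le_mul h3 h4 (abs_nonneg _) zero_le_one
    _ = max |c| |B| := one_mul _

/-- If `u` is bounded, continuous, λ-dominated and `γ : (-∞,0] → ℝⁿ` is
`(u,L)`-λ-calibrated on every `[t,0]`, then `u(x₀)` equals the improper
discounted action of `γ`, and it is a lower bound for the discounted action of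
every piecewise `C¹` curve ending at `x₀`. -/
theorem stmt_9 {n : ℕ} (hn : 1 ≤ n) (lam : ℝ) (hlam : 0 < lam)
    (H L : E n × E n → ℝ) (hH : Tonelli H) (hLH : IsLagrangianOf L H)
    (hper : ∀ (k : Fin n → ℤ) (x pp : E n), H (x + intVec k, pp) = H (x, pp))
    (u : E n → ℝ) (huc : Continuous u) (hub : ∃ C : ℝ, ∀ x : E n, |u x| ≤ C)
    (hdom : Dominated lam L u)
    (x₀ : E n) (γ γ' : ℝ → E n) (hγ0 : γ 0 = x₀)
    (hpw : ∀ a < (0:ℝ), PiecewiseC1 a 0 γ γ')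
    (hcal : ∀ a < (0:ℝ), Calibrated lam L u a 0 γ γ') :
    IntegrableOn (fun s => Real.exp (lam * s) * L (γ s, γ' s)) (Set.Iic 0) volume ∧
    u x₀ = ∫ s in Set.Iic (0:ℝ), Real.exp (lam * s) * L (γ s, γ' s) ∧
    ∀ σ σ' : ℝ → E n, (∀ a < (0:ℝ), PiecewiseC1 a 0 σ σ') → σ 0 = x₀ →
      IntegrableOn (fun s => Real.exp (lam * s) * L (σ s, σ' s)) (Set.Iic 0) volume →
      u x₀ ≤ ∫ s in Set.Iic (0:ℝ), Real.exp (lam * s) * L (σ s, σ' s)  := by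
  obtain ⟨hHc2, -, hsl⟩ := hH
  have hHcont : Continuous H := hHc2.continuous
  have hLm : Measurable L := L_meas hHcont hLH
  obtain ⟨c, hc⟩ := L_lb hHcont hLH hper
  have hup : ∀ V : ℝ, ∃ B : ℝ, ∀ x v : E n, ‖v‖ ≤ V → L (x, v) ≤ B := L_ub hLH hsl
  obtain ⟨Cu, hCu⟩ := hub
  have hCu0 : 0 ≤ Cu := (abs_nonneg _).trans (hCu x₀)
  -- general facts for any admissible curve
  have hIoc : ∀ (w w' : ℝ → E n), (∀ a < (0:ℝ), PiecewiseC1 a 0 w w') → ∀ a : ℝ,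
      IntegrableOn (fun t => Real.exp (lam * t) * L (w t, w' t)) (Set.Ioc a 0) volume := by
    intro w w' hpww a
    rcases le_or_gt 0 a with h0 | h0
    · rw [Set.Ioc_eq_empty (by exact not_lt.mpr h0)]
      exact integrableOn_empty
    · exact (integrableOn_interval hLm hc hup hlam h0.le (hpww a h0)).mono_set
        Set.Ioc_subset_Icc_self
  have hzero : ∀ w : ℝ → E n,
      Tendsto (fun a : ℝ => Real.exp (lam * a) * u (w a)) atBot (nhds 0) := by
    intro w
    apply squeeze_zero_norm (a := fun a : ℝ => Cu * Real.exp (lam * a))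
    · intro a
      rw [Real.norm_eq_abs, abs_mul, abs_of_pos (Real.exp_pos _), mul_comm]
      exact mul_le_mul_of_nonneg_right (hCu _) (Real.exp_pos _).le
    · have h1 : Tendsto (fun a : ℝ => lam * a) atBot atBot :=
        tendsto_id.const_mul_atBot hlam
      have h2 : Tendsto (fun a : ℝ => Real.exp (lam * a)) atBot (nhds 0) :=
        Real.tendsto_exp_atBot.comp h1
      simpa using h2.const_mul Cu
  -- value of interval integrals of the calibrated curve
  have hval : ∀ a : ℝ, a < 0 →
      (∫ t in a..(0:ℝ), Real.exp (lam * t) * L (γ t, γ' t))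
        = u x₀ - Real.exp (lam * a) * u (γ a) := by
    intro a ha
    have h : Real.exp (lam * 0) * u (γ 0) - Real.exp (lam * a) * u (γ a)
        = ∫ t in a..(0:ℝ), Real.exp (lam * t) * L (γ t, γ' t) := hcal a ha
    rw [← h, hγ0]
    simp
  -- uniform bound on the interval integrals of the norm
  have hnormb : ∀ a : ℝ, a < 0 →
      (∫ t in a..(0:ℝ), ‖Real.exp (lam * t) * L (γ t, γ' t)‖)
        ≤ |u x₀| + Cu + 2 * |c| / lam := by
    intro a ha
    have hIf : IntervalIntegrable (fun t => Real.exp (lam * t) * L (γ t, γ' t)) volume a 0 :=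
      (intervalIntegrable_iff_integrableOn_Ioc_of_le ha.le).mpr (hIoc γ γ' hpw a)
    have hIe : IntervalIntegrable (fun t => Real.exp (lam * t)) volume a 0 :=
      (Real.continuous_exp.comp (continuous_const.mul continuous_id)).intervalIntegrable a 0
    have hpt : ∀ t ∈ Set.Icc a 0, ‖Real.exp (lam * t) * L (γ t, γ' t)‖
        ≤ Real.exp (lam * t) * L (γ t, γ' t) + 2 * |c| * Real.exp (lam * t) := by
      intro t _
      have h1 : c * Real.exp (lam * t) ≤ Real.exp (lam * t) * L (γ t, γ' t) := by
        have := hc (γ t) (γ' t)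
        nlinarith [Real.exp_pos (lam * t)]
      have h2 : -|c| ≤ c := neg_abs_le c
      rcases le_total 0 (Real.exp (lam * t) * L (γ t, γ' t)) with h0 | h0
      · rw [Real.norm_eq_abs, abs_of_nonneg h0]
        nlinarith [Real.exp_pos (lam * t), abs_nonneg c]
      · rw [Real.norm_eq_abs, abs_of_nonpos h0]
        nlinarith [Real.exp_pos (lam * t)]
    calc (∫ t in a..(0:ℝ), ‖Real.exp (lam * t) * L (γ t, γ' t)‖)
        ≤ ∫ t in a..(0:ℝ), (Real.exp (lam * t) * L (γ t, γ' t)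
            + 2 * |c| * Real.exp (lam * t)) :=
          intervalIntegral.integral_mono_on ha.le hIf.norm
            (hIf.add (hIe.const_mul _)) hpt
      _ = (∫ t in a..(0:ℝ), Real.exp (lam * t) * L (γ t, γ' t))
            + 2 * |c| * ∫ t in a..(0:ℝ), Real.exp (lam * t) := by
          rw [intervalIntegral.integral_add hIf (hIe.const_mul _),
            intervalIntegral.integral_const_mul]
      _ ≤ |u x₀| + Cu + 2 * |c| / lam := by
          rw [hval a ha, exp_intA hlam a]
          have e1 : 0 < Real.exp (lam * a) := Real.exp_pos _
          have e2 : Real.exp (lam * a) ≤ 1 :=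
            Real.exp_le_one_iff.mpr (mul_nonpos_of_nonneg_of_nonpos hlam.le ha.le)
          have e3 : |u (γ a)| ≤ Cu := hCu _
          have e4 : u x₀ ≤ |u x₀| := le_abs_self _
          have e5 : -Cu ≤ u (γ a) := neg_le_of_abs_le e3
          have e6 : u (γ a) ≤ Cu := le_of_abs_le e3
          have e7 : 2 * |c| * ((1 - Real.exp (lam * a)) / lam) ≤ 2 * |c| / lam := by
            have h8 : (1 - Real.exp (lam * a)) / lam ≤ 1 / lam := by gcongr; linarith
            calc 2 * |c| * ((1 - Real.exp (lam * a)) / lam) ≤ 2 * |c| * (1 / lam) :=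
                mul_le_mul_of_nonneg_left h8 (by positivity)
              _ = 2 * |c| / lam := by ring
          nlinarith [abs_nonneg c]
  -- integrability on Iic 0
  have hint : IntegrableOn (fun t => Real.exp (lam * t) * L (γ t, γ' t)) (Set.Iic 0) volume := by
    refine integrableOn_Iic_of_intervalIntegral_norm_bounded (a := fun r : ℝ => r)
      (l := atBot) (|u x₀| + Cu + 2 * |c| / lam) 0 (hIoc γ γ' hpw) tendsto_id ?_
    filter_upwards [eventually_lt_atBot (0:ℝ)] with a ha using hnormb a ha
  have htend : Tendsto (fun a : ℝ => ∫ t in a..(0:ℝ), Real.exp (lam * t) * L (γ t, γ' t))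
      atBot (nhds (∫ s in Set.Iic (0:ℝ), Real.exp (lam * s) * L (γ s, γ' s))) :=
    intervalIntegral_tendsto_integral_Iic 0 hint tendsto_id
  have htend2 : Tendsto (fun a : ℝ => u x₀ - Real.exp (lam * a) * u (γ a))
      atBot (nhds (u x₀)) := by
    simpa using tendsto_const_nhds.sub (hzero γ)
  have hEq : u x₀ = ∫ s in Set.Iic (0:ℝ), Real.exp (lam * s) * L (γ s, γ' s) := by
    refine tendsto_nhds_unique (htend2.congr' ?_) htend
    filter_upwards [eventually_lt_atBot (0:ℝ)] with a ha
    exact (hval a ha).symm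
  refine ⟨hint, hEq, ?_⟩
  intro σ σ' hpwσ hσ0 hintσ
  have htendσ : Tendsto (fun a : ℝ => ∫ t in a..(0:ℝ), Real.exp (lam * t) * L (σ t, σ' t))
      atBot (nhds (∫ s in Set.Iic (0:ℝ), Real.exp (lam * s) * L (σ s, σ' s))) :=
    intervalIntegral_tendsto_integral_Iic 0 hintσ tendsto_id
  have htend2σ : Tendsto (fun a : ℝ => u x₀ - Real.exp (lam * a) * u (σ a))
      atBot (nhds (u x₀)) := by
    simpa using tendsto_const_nhds.sub (hzero σ)
  refine le_of_tendsto_of_tendsto htend2σ htendσ ?_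
  filter_upwards [eventually_lt_atBot (0:ℝ)] with a ha
  have h := hdom a 0 ha σ σ' (hpwσ a ha)
  simpa [hσ0] using h


end
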